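/- Propensity-score sufficiency (Rosenbaum–Rubin): if Y(1), Y(0) ⊥ T | Z (unconfoundedness given Z), then Y(1), Y(0) ⊥ T | g(Z), where g(Z) = P(T=1|Z); in particular T ⊥ Z | g(Z). -/

import Mathlib

open MeasureTheory ProbabilityTheory

lemma rr_aux {Ω : Type*} {m' mZ : MeasurableSpace Ω} [mΩ : MeasurableSpace Ω]
    [StandardBorelSpace Ω]
    (μ : Measure Ω) [IsProbabilityMeasure μ]
    {β : Type*} [MeasurableSpace β]
    (hm'Z : m' ≤ mZ) (hmZ : mZ ≤ mΩ)
    (T : Ω → ℝ) (hT : Measurable T) (hTbin : ∀ ω, T ω = 0 ∨ T ω = 1)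
    (W : Ω → β) (hW : Measurable W)
    (g' : Ω → ℝ) (hg' : Measurable[m'] g') (hbound : ∀ᵐ ω ∂μ, ‖g' ω‖ ≤ 1)
    (hgT : (μ⟦T ⁻¹' {1} | mZ⟧) =ᵐ[μ] g')
    (H : ∀ s, MeasurableSet s →
      (μ⟦W ⁻¹' s ∩ T ⁻¹' {1} | mZ⟧) =ᵐ[μ] fun ω => (μ⟦W ⁻¹' s | mZ⟧) ω * g' ω) :
    CondIndepFun m' (hm'Z.trans hmZ) W T μ := by
  have hm' : m' ≤ mΩ := hm'Z.trans hmZ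
  have hg'I : Integrable g' μ :=
    (integrable_const (1 : ℝ)).mono' ((hg'.mono hm' le_rfl).aestronglyMeasurable) hbound
  have hB : MeasurableSet (T ⁻¹' {1}) := hT (measurableSet_singleton 1)
  -- conditional expectation of T⁻¹'{1} given m' is g'
  have hTg' : (μ⟦T ⁻¹' {1} | m'⟧) =ᵐ[μ] g' := by
    calc (μ⟦T ⁻¹' {1} | m'⟧)
        =ᵐ[μ] μ[(μ⟦T ⁻¹' {1} | mZ⟧) | m'] := (condExp_condExp_of_le hm'Z hmZ).symm
      _ =ᵐ[μ] μ[g' | m'] := condExp_congr_ae hgT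
      _ =ᵐ[μ] g' := by rw [condExp_of_stronglyMeasurable hm' hg'.stronglyMeasurable hg'I]
  -- key: for all s, μ⟦W⁻¹s ∩ {T=1}|m'⟧ = μ⟦W⁻¹s|m'⟧ * g'
  have hkey : ∀ s, MeasurableSet s →
      (μ⟦W ⁻¹' s ∩ T ⁻¹' {1} | m'⟧) =ᵐ[μ] fun ω => (μ⟦W ⁻¹' s | m'⟧) ω * g' ω := by
    intro s hs
    calc (μ⟦W ⁻¹' s ∩ T ⁻¹' {1} | m'⟧)
        =ᵐ[μ] μ[(μ⟦W ⁻¹' s ∩ T ⁻¹' {1} | mZ⟧) | m'] := (condExp_condExp_of_le hm'Z hmZ).symm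
      _ =ᵐ[μ] μ[g' * (μ⟦W ⁻¹' s | mZ⟧) | m'] := by
          refine condExp_congr_ae ((H s hs).trans ?_)
          filter_upwards with ω using (mul_comm _ _)
      _ =ᵐ[μ] g' * μ[(μ⟦W ⁻¹' s | mZ⟧) | m'] :=
          condExp_stronglyMeasurable_mul_of_bound hm' hg'.stronglyMeasurable
            integrable_condExp 1 hbound
      _ =ᵐ[μ] fun ω => (μ⟦W ⁻¹' s | m'⟧) ω * g' ω := by
          filter_upwards [condExp_condExp_of_le hm'Z hmZ
            (f := Set.indicator (W ⁻¹' s) fun _ => (1:ℝ))] with ω hω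
          simp only [Pi.mul_apply, hω, mul_comm]
  rw [condIndepFun_iff_condExp_inter_preimage_eq_mul (m' := m') (hm' := hm'Z.trans hmZ) hW hT]
  intro s t hs ht
  have hWs : MeasurableSet (W ⁻¹' s) := hW hs
  by_cases h1 : (1:ℝ) ∈ t <;> by_cases h0 : (0:ℝ) ∈ t
  · -- T⁻¹'t = univ
    have htu : T ⁻¹' t = Set.univ := by
      ext ω; simp only [Set.mem_preimage, Set.mem_univ, iff_true]
      rcases hTbin ω with h | h <;> rw [h] <;> assumption
    rw [htu, Set.inter_univ, Set.indicator_univ, condExp_const (μ := μ) hm' (1:ℝ)]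
    filter_upwards with ω
    simp
  · -- T⁻¹'t = T⁻¹'{1}
    have htu : T ⁻¹' t = T ⁻¹' {1} := by
      ext ω
      rcases hTbin ω with h | h <;>
        simp only [Set.mem_preimage, Set.mem_singleton_iff, h] <;> simp [h0, h1]
    rw [htu]
    refine (hkey s hs).trans ?_
    filter_upwards [hTg'] with ω hω
    rw [hω]
  · -- T⁻¹'t = (T⁻¹'{1})ᶜ
    have htu : T ⁻¹' t = (T ⁻¹' {1})ᶜ := by
      ext ω; simp only [Set.mem_preimage, Set.mem_compl_iff, Set.mem_singleton_iff]
      rcases hTbin ω with h | h <;> rw [h] <;> simp [h0, h1]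
    rw [htu]
    -- indicator identities
    have hind1 : (Set.indicator (W ⁻¹' s ∩ (T ⁻¹' {1})ᶜ) fun _ => (1:ℝ)) =
        (Set.indicator (W ⁻¹' s) fun _ => (1:ℝ))
          - (Set.indicator (W ⁻¹' s ∩ T ⁻¹' {1}) fun _ => (1:ℝ)) := by
      funext ω
      by_cases hA : ω ∈ W ⁻¹' s <;> by_cases hBω : ω ∈ T ⁻¹' {1} <;>
        simp [Set.indicator_apply, hA, hBω]
    have hind2 : (Set.indicator ((T ⁻¹' {1})ᶜ) fun _ => (1:ℝ)) =
        (fun _ => (1:ℝ)) - (Set.indicator (T ⁻¹' {1}) fun _ => (1:ℝ)) := by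
      funext ω
      by_cases hBω : ω ∈ T ⁻¹' {1} <;> simp [Set.indicator_apply, hBω]
    have hIA : Integrable (Set.indicator (W ⁻¹' s) fun _ => (1:ℝ)) μ :=
      (integrable_const (1:ℝ)).indicator hWs
    have hIAB : Integrable (Set.indicator (W ⁻¹' s ∩ T ⁻¹' {1}) fun _ => (1:ℝ)) μ :=
      (integrable_const (1:ℝ)).indicator (hWs.inter hB)
    have hIB : Integrable (Set.indicator (T ⁻¹' {1}) fun _ => (1:ℝ)) μ :=
      (integrable_const (1:ℝ)).indicator hB
    have e1 : (μ⟦W ⁻¹' s ∩ (T ⁻¹' {1})ᶜ | m'⟧)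
        =ᵐ[μ] (μ⟦W ⁻¹' s | m'⟧) - (μ⟦W ⁻¹' s ∩ T ⁻¹' {1} | m'⟧) := by
      rw [hind1]; exact condExp_sub hIA hIAB m'
    have e2 : (μ⟦(T ⁻¹' {1})ᶜ | m'⟧)
        =ᵐ[μ] (fun _ => (1:ℝ)) - (μ⟦T ⁻¹' {1} | m'⟧) := by
      rw [hind2]
      have h2 := condExp_sub (μ := μ) (m := m') (integrable_const (1:ℝ)) hIB
      rw [condExp_const (μ := μ) hm' (1:ℝ)] at h2
      exact h2
    filter_upwards [e1, e2, hkey s hs, hTg'] with ω h1ω h2ω h3ω h4ω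
    simp only [Pi.sub_apply] at h1ω h2ω
    rw [h1ω, h2ω, h3ω, h4ω]
    ring
  · -- T⁻¹'t = ∅
    have htu : T ⁻¹' t = ∅ := by
      ext ω; simp only [Set.mem_preimage, Set.mem_empty_iff_false, iff_false]
      rcases hTbin ω with h | h <;> rw [h] <;> assumption
    rw [htu, Set.inter_empty, Set.indicator_empty, condExp_const (μ := μ) hm' (0:ℝ)]
    filter_upwards with ω
    simp

/-- Propensity-score sufficiency (Rosenbaum–Rubin): if the potential outcomes
`(Y0, Y1)` are conditionally independent of the treatment `T` given `Z`, then they are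
conditionally independent of `T` given the propensity score `g(Z) = P(T=1|Z)`; in particular the
balancing property `T ⟂ Z | g(Z)` holds. -/
theorem stmt17
    {Ω : Type*} [MeasurableSpace Ω] [StandardBorelSpace Ω]
    (μ : Measure Ω) [IsProbabilityMeasure μ]
    {𝒵 : Type*} [MeasurableSpace 𝒵] [StandardBorelSpace 𝒵]
    (Y Y0 Y1 T : Ω → ℝ) (Z : Ω → 𝒵)
    (hY0 : Measurable Y0) (hY1 : Measurable Y1) (hT : Measurable T) (hZ : Measurable Z)
    (hTbin : ∀ ω, T ω = 0 ∨ T ω = 1)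
    (hconsist : ∀ ω, Y ω = T ω * Y1 ω + (1 - T ω) * Y0 ω)
    -- the propensity score g(Z) = P(T=1|Z)
    (g : 𝒵 → ℝ) (hg : Measurable g)
    (hgdef : (fun ω => g (Z ω)) =ᵐ[μ] μ[T | MeasurableSpace.comap Z inferInstance])
    (hpos : ∀ᵐ ω ∂μ, 0 < g (Z ω) ∧ g (Z ω) < 1)
    -- unconfoundedness given Z
    (hunconf : CondIndepFun (MeasurableSpace.comap Z inferInstance) hZ.comap_le
      (fun ω => (Y0 ω, Y1 ω)) T μ) :
    CondIndepFun (MeasurableSpace.comap (fun ω => g (Z ω)) inferInstance)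
        ((hg.comp hZ).comap_le) (fun ω => (Y0 ω, Y1 ω)) T μ
    ∧ CondIndepFun (MeasurableSpace.comap (fun ω => g (Z ω)) inferInstance)
        ((hg.comp hZ).comap_le) T Z μ := by
  have hm'Z : MeasurableSpace.comap (fun ω => g (Z ω)) inferInstance
      ≤ MeasurableSpace.comap Z inferInstance := by
    have h1 : MeasurableSpace.comap (fun ω => g (Z ω))
          (inferInstance : MeasurableSpace ℝ)
        = MeasurableSpace.comap Z (MeasurableSpace.comap g inferInstance) :=
      MeasurableSpace.comap_comp.symm
    rw [h1]
    exact MeasurableSpace.comap_mono hg.comap_le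
  have hmZ : MeasurableSpace.comap Z inferInstance ≤ _ := hZ.comap_le
  have hg' : Measurable[MeasurableSpace.comap (fun ω => g (Z ω)) inferInstance]
      (fun ω => g (Z ω)) := Measurable.of_comap_le le_rfl
  have hbound : ∀ᵐ ω ∂μ, ‖g (Z ω)‖ ≤ 1 := by
    filter_upwards [hpos] with ω hω
    rw [Real.norm_eq_abs, abs_le]
    exact ⟨le_trans (by norm_num) hω.1.le, hω.2.le⟩
  have hindT : Set.indicator (T ⁻¹' {1}) (fun _ => (1:ℝ)) = T := by
    funext ω
    rcases hTbin ω with h | h <;>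
      simp [Set.indicator_apply, Set.mem_preimage, h]
  have hgT : (μ⟦T ⁻¹' {1} | MeasurableSpace.comap Z inferInstance⟧)
      =ᵐ[μ] fun ω => g (Z ω) := by
    rw [hindT]; exact hgdef.symm
  have hTint : Integrable T μ := by
    refine (integrable_const (1:ℝ)).mono' hT.aestronglyMeasurable ?_
    filter_upwards with ω
    rcases hTbin ω with h | h <;> simp [h]
  -- H for W = (Y0, Y1)
  rw [condIndepFun_iff_condExp_inter_preimage_eq_mul (hY0.prodMk hY1) hT] at hunconf
  have H1 : ∀ s, MeasurableSet s →
      (μ⟦(fun ω => (Y0 ω, Y1 ω)) ⁻¹' s ∩ T ⁻¹' {1} | MeasurableSpace.comap Z inferInstance⟧)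
        =ᵐ[μ] fun ω => (μ⟦(fun ω => (Y0 ω, Y1 ω)) ⁻¹' s |
          MeasurableSpace.comap Z inferInstance⟧) ω * g (Z ω) := by
    intro s hs
    refine (hunconf s {1} hs (measurableSet_singleton 1)).trans ?_
    filter_upwards [hgT] with ω hω
    rw [hω]
  -- H for W = Z
  have H2 : ∀ u, MeasurableSet u →
      (μ⟦Z ⁻¹' u ∩ T ⁻¹' {1} | MeasurableSpace.comap Z inferInstance⟧)
        =ᵐ[μ] fun ω => (μ⟦Z ⁻¹' u | MeasurableSpace.comap Z inferInstance⟧) ω * g (Z ω) := by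
    intro u hu
    have hmem : MeasurableSet[MeasurableSpace.comap Z inferInstance] (Z ⁻¹' u) := ⟨u, hu, rfl⟩
    have hsm : StronglyMeasurable[MeasurableSpace.comap Z inferInstance]
        (Set.indicator (Z ⁻¹' u) fun _ => (1:ℝ)) :=
      stronglyMeasurable_const.indicator hmem
    have hindI : Integrable (Set.indicator (Z ⁻¹' u) fun _ => (1:ℝ)) μ :=
      (integrable_const (1:ℝ)).indicator (hmZ _ hmem)
    have hindmul : Set.indicator (Z ⁻¹' u ∩ T ⁻¹' {1}) (fun _ => (1:ℝ))
        = (Set.indicator (Z ⁻¹' u) fun _ => (1:ℝ)) * T := by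
      funext ω
      by_cases hA : ω ∈ Z ⁻¹' u <;> rcases hTbin ω with h | h <;>
        simp [Set.indicator_apply, hA, Set.mem_preimage, h]
    have hcondind : (μ⟦Z ⁻¹' u | MeasurableSpace.comap Z inferInstance⟧)
        = Set.indicator (Z ⁻¹' u) fun _ => (1:ℝ) :=
      condExp_of_stronglyMeasurable hmZ hsm hindI
    rw [hindmul, hcondind]
    refine (condExp_stronglyMeasurable_mul_of_bound hmZ hsm hTint 1 ?_).trans ?_
    · filter_upwards with ω
      by_cases hA : ω ∈ Z ⁻¹' u <;> simp [Set.indicator_apply, hA]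
    · filter_upwards [hgdef] with ω hω
      simp only [Pi.mul_apply]
      rw [← hω]
  exact ⟨rr_aux μ hm'Z hmZ T hT hTbin _ (hY0.prodMk hY1) _ hg' hbound hgT H1,
    Kernel.IndepFun.symm (rr_aux μ hm'Z hmZ T hT hTbin Z hZ _ hg' hbound hgT H2)⟩
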